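/- Let σ = (λ₁, …, λₙ) be a list of real numbers with λ₁ > 0 ≥ λ₂ ≥ ⋯ ≥ λₙ and λ₁ + ⋯ + λₙ ≥ 0 (a Suleĭmanova spectrum). Define x₁ = (λ₁ + ⋯ + λₙ)/n and xᵢ = x₁ − λᵢ for 2 ≤ i ≤ n. Then all xᵢ are nonnegative, and the matrix X whose first row is (x₁, …, xₙ) and whose i-th row (i ≥ 2) is the first row with entries x₁ and xᵢ swapped, is a nonnegative matrix whose multiset of eigenvalues is exactly {λ₁, …, λₙ}. -/

import Mathlib

open Matrix Polynomial

lemma my_charpoly_conj {n : ℕ} (P T Q : Matrix (Fin n) (Fin n) ℂ)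
    (hPQ : P * Q = 1) : (P * T * Q).charpoly = T.charpoly := by
  have h1 : (P.map C) * (Q.map C) = 1 := by
    rw [← Matrix.map_mul (f := (C : ℂ →+* ℂ[X])), hPQ]
    ext i j
    simp [Matrix.one_apply, apply_ite (C : ℂ →+* ℂ[X])]
  have hscalar : (Matrix.scalar (Fin n) (X : ℂ[X])) = (X : ℂ[X]) • (1 : Matrix (Fin n) (Fin n) ℂ[X]) := by
    ext i j
    simp [Matrix.one_apply, Matrix.diagonal_apply]
  have key : charmatrix (P * T * Q) = (P.map C) * charmatrix T * (Q.map C) := by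
    rw [charmatrix, charmatrix, hscalar]
    have hmap : ((P * T * Q).map (C : ℂ →+* ℂ[X]) : Matrix (Fin n) (Fin n) ℂ[X])
        = P.map C * T.map C * Q.map C := by
      rw [Matrix.map_mul (f := (C : ℂ →+* ℂ[X])), Matrix.map_mul (f := (C : ℂ →+* ℂ[X]))]
    rw [RingHom.mapMatrix_apply, RingHom.mapMatrix_apply, hmap, Matrix.mul_sub, Matrix.sub_mul,
      Matrix.mul_smul, Matrix.mul_one, Matrix.smul_mul, h1]
  rw [Matrix.charpoly, Matrix.charpoly, key, Matrix.det_mul, Matrix.det_mul]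
  have h2 : (P.map (C : ℂ →+* ℂ[X])).det * (Q.map C).det = 1 := by
    rw [← Matrix.det_mul, h1, Matrix.det_one]
  calc (P.map (C : ℂ →+* ℂ[X])).det * (charmatrix T).det * (Q.map C).det
      = (charmatrix T).det * ((P.map C).det * (Q.map C).det) := by ring
    _ = (charmatrix T).det := by rw [h2, mul_one]


/-- the Suleĭmanova construction gives a nonnegative permutative matrix
realizing a Suleĭmanova spectrum. -/
theorem stmt1 (n : ℕ) (hn : 0 < n) (l : Fin n → ℝ)
    (hpos : l ⟨0, hn⟩ > 0)
    (hnonpos : ∀ i, i ≠ ⟨0, hn⟩ → l i ≤ 0)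
    (hmono : ∀ i j : Fin n, i ≤ j → l j ≤ l i)
    (hsum : 0 ≤ ∑ i, l i)
    (x : Fin n → ℝ)
    (hx : ∀ i, x i = if i = ⟨0, hn⟩ then (∑ j, l j) / n
      else (∑ j, l j) / n - l i)
    (X : Matrix (Fin n) (Fin n) ℝ)
    (hX : ∀ i j, X i j =
      if i ≠ ⟨0, hn⟩ ∧ j = i then x ⟨0, hn⟩
      else if i ≠ ⟨0, hn⟩ ∧ j = ⟨0, hn⟩ then x i
      else x j) :
    (∀ i, 0 ≤ x i) ∧ (∀ i j, 0 ≤ X i j) ∧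
      (X.map Complex.ofReal).charpoly.roots =
        Finset.univ.val.map (fun i => (l i : ℂ)) := by
  set z : Fin n := ⟨0, hn⟩ with hz
  have hnR : (n : ℝ) ≠ 0 := Nat.cast_ne_zero.mpr hn.ne'
  have hx0 : x z = (∑ j, l j) / n := by rw [hx]; simp
  have hx0n : 0 ≤ x z := by rw [hx0]; positivity
  have hxi : ∀ i, i ≠ z → x i = x z - l i := by
    intro i hi; rw [hx i, hx0, if_neg hi]
  have hxnn : ∀ i, 0 ≤ x i := by
    intro i
    by_cases h : i = z
    · rw [h]; exact hx0n
    · rw [hxi i h]; have := hnonpos i h; linarith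
  have hsumx : ∑ k, x k = l z := by
    have h1 : ∀ k, x k = x z - l k + (if k = z then l z else 0) := by
      intro k
      by_cases h : k = z
      · subst h; simp
      · rw [hxi k h, if_neg h, add_zero]
    rw [Finset.sum_congr rfl fun k _ => h1 k]
    rw [Finset.sum_add_distrib, Finset.sum_sub_distrib, Finset.sum_const,
      Finset.sum_ite_eq' Finset.univ z (fun _ => l z)]
    simp only [Finset.card_univ, Fintype.card_fin, Finset.mem_univ, if_true, smul_eq_mul]
    rw [hx0]
    rw [nsmul_eq_mul]; field_simp; ring
  have hXz : ∀ k, X z k = x k := by intro k; rw [hX]; simp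
  have hrow : ∀ i, ∑ k, X i k = l z := by
    intro i
    by_cases hi : i = z
    · subst hi
      rw [Finset.sum_congr rfl fun k _ => hXz k, hsumx]
    · have h1 : ∀ k, X i k = x k + (if k = i then l i else 0) - (if k = z then l i else 0) := by
        intro k
        rw [hX]
        by_cases hk : k = i
        · subst hk
          rw [if_pos ⟨hi, rfl⟩, if_pos rfl, if_neg hi, hxi k hi]
          ring
        · rw [if_neg (fun h => hk h.2), if_neg hk]
          by_cases hkz : k = z
          · subst hkz
            rw [if_pos ⟨hi, rfl⟩, if_pos rfl, hxi i hi]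
            ring
          · rw [if_neg (fun h => hkz h.2), if_neg hkz, add_zero, sub_zero]
      rw [Finset.sum_congr rfl fun k _ => h1 k, Finset.sum_sub_distrib,
        Finset.sum_add_distrib, Finset.sum_ite_eq' Finset.univ i (fun _ => l i),
        Finset.sum_ite_eq' Finset.univ z (fun _ => l i)]
      simp only [Finset.mem_univ, if_true]
      rw [hsumx]; ring
  refine ⟨hxnn, ?_, ?_⟩
  · intro i j; rw [hX]; split_ifs <;> apply hxnn
  -- the eigenvalue claim
  set N : Matrix (Fin n) (Fin n) ℝ :=
    Matrix.of fun i j => if j = z ∧ ¬ i = z then (1:ℝ) else 0 with hN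
  set T : Matrix (Fin n) (Fin n) ℝ :=
    Matrix.of fun i j => if i = j then l i else if i = z then x j else 0 with hT
  have hN2 : N * N = 0 := by
    ext i j
    rw [Matrix.mul_apply]
    simp only [hN, Matrix.of_apply, Matrix.zero_apply]
    apply Finset.sum_eq_zero
    intro k _
    by_cases h1 : k = z ∧ ¬ i = z
    · rw [if_pos h1, if_neg (fun h2 => h2.2 h1.1), mul_zero]
    · rw [if_neg h1, zero_mul]
  have hPQ : (1 + N) * (1 - N) = 1 := by
    have : (1 + N) * (1 - N) = 1 + N - (N + N * N) := by
      rw [mul_sub, mul_one, add_mul, one_mul]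
    rw [this, hN2, add_zero, add_sub_cancel_right]
  have hXN : ∀ i j, (X * N) i j = if j = z then l z - X i z else 0 := by
    intro i j
    rw [Matrix.mul_apply]
    by_cases hj : j = z
    · rw [if_pos hj]
      have h1 : ∀ k, X i k * N k j = X i k - (if k = z then X i k else 0) := by
        intro k
        simp only [hN, Matrix.of_apply]
        by_cases hk : k = z
        · rw [if_neg (fun h => h.2 hk), mul_zero, if_pos hk, sub_self]
        · rw [if_pos ⟨hj, hk⟩, mul_one, if_neg hk, sub_zero]
      rw [Finset.sum_congr rfl fun k _ => h1 k, Finset.sum_sub_distrib,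
        Finset.sum_ite_eq' Finset.univ z (fun k => X i k), hrow i]
      simp
    · rw [if_neg hj]
      apply Finset.sum_eq_zero
      intro k _
      simp only [hN, Matrix.of_apply]
      rw [if_neg (fun h => hj h.1), mul_zero]
  have hNT : ∀ i j, (N * T) i j = if i = z then 0 else T z j := by
    intro i j
    rw [Matrix.mul_apply]
    by_cases hi : i = z
    · rw [if_pos hi]
      apply Finset.sum_eq_zero
      intro k _
      simp only [hN, Matrix.of_apply]
      rw [if_neg (fun h => h.2 hi), zero_mul]
    · rw [if_neg hi, Finset.sum_eq_single z]
      · show (if (z = z ∧ ¬ i = z) then (1:ℝ) else 0) * T z j = T z j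
        rw [if_pos ⟨rfl, hi⟩, one_mul]
      · intro k _ hk
        simp only [hN, Matrix.of_apply]
        rw [if_neg (fun h => hk h.1), zero_mul]
      · intro h
        exact absurd (Finset.mem_univ z) h
  have hXP : X * (1 + N) = (1 + N) * T := by
    rw [mul_add, mul_one, add_mul, one_mul]
    ext i j
    simp only [Matrix.add_apply, hXN, hNT]
    by_cases hi : i = z <;> by_cases hj : j = z
    · rw [if_pos hj, if_pos hi, hi, hj, hXz]
      simp only [hT, Matrix.of_apply, if_pos rfl]
      simp only [if_true]
      ring
    · have hzj : ¬ ((z : Fin n) = j) := fun h => hj h.symm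
      rw [if_neg hj, if_pos hi, hi, hXz]
      simp only [hT, Matrix.of_apply, if_neg hzj, if_pos rfl]
      simp only [if_true, add_zero]
    · rw [if_pos hj, if_neg hi, hj]
      have hiz' : ¬ (i = (z : Fin n)) := hj ▸ hi
      simp only [hT, Matrix.of_apply, if_neg hi, if_pos rfl]
      simp only [if_true]
      ring
    · rw [if_neg hj, if_neg hi]
      have hzj : ¬ ((z : Fin n) = j) := fun h => hj h.symm
      by_cases hij : j = i
      · rw [hX]
        rw [if_pos ⟨hi, hij⟩]
        simp only [hT, Matrix.of_apply, if_neg hzj, if_pos rfl]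
        simp only [if_true]
        rw [hij, if_pos rfl, hxi i hi]
        ring
      · rw [hX, if_neg (fun h => hij h.2), if_neg (fun h => hj h.2)]
        have hij' : ¬ (i = j) := fun h => hij h.symm
        simp only [hT, Matrix.of_apply, if_neg hij', if_neg hi, if_neg hzj, if_pos rfl]
        simp only [if_true, add_zero, zero_add]
  have hXfact : X = (1 + N) * T * (1 - N) := by
    calc X = X * ((1 + N) * (1 - N)) := by rw [hPQ, mul_one]
      _ = (X * (1 + N)) * (1 - N) := by rw [mul_assoc]
      _ = (1 + N) * T * (1 - N) := by rw [hXP]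
  have hofReal : X.map Complex.ofReal =
      ((1 + N).map Complex.ofRealHom) * (T.map Complex.ofRealHom) *
        ((1 - N).map Complex.ofRealHom) := by
    have h0 : X.map Complex.ofReal = X.map Complex.ofRealHom := rfl
    rw [h0, hXfact, Matrix.map_mul (f := Complex.ofRealHom),
      Matrix.map_mul (f := Complex.ofRealHom)]
  have hPQc : ((1 + N).map Complex.ofRealHom) * ((1 - N).map Complex.ofRealHom) = 1 := by
    rw [← Matrix.map_mul (f := Complex.ofRealHom), hPQ]
    exact Matrix.map_one _ (map_zero _) (map_one _)
  rw [hofReal, my_charpoly_conj _ _ _ hPQc]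
  have hTri : (T.map Complex.ofRealHom).BlockTriangular id := by
    intro i j hij
    have hji : ¬ (i = j) := fun h => absurd hij (by simp [h])
    have hiz : ¬ (i = z) := by
      intro h
      have hzle : z ≤ j := by simp [hz, Fin.le_def]
      exact absurd (lt_of_le_of_lt hzle (h ▸ hij)) (lt_irrefl _)
    simp [Matrix.map_apply, hT, hji, hiz]
  rw [Matrix.charpoly_of_upperTriangular _ hTri]
  have hdiag : ∀ i, (T.map Complex.ofRealHom) i i = ((l i : ℝ) : ℂ) := by
    intro i
    simp [hT, Matrix.map_apply]
  rw [Finset.prod_congr rfl fun i _ => by rw [hdiag i]]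
  rw [Finset.prod_eq_multiset_prod]
  rw [show (fun i : Fin n => (Polynomial.X : ℂ[X]) - C ((l i : ℝ) : ℂ)) =
    (fun a : ℂ => (Polynomial.X : ℂ[X]) - C a) ∘ (fun i : Fin n => ((l i : ℝ) : ℂ)) from rfl]
  rw [← Multiset.map_map, Polynomial.roots_multiset_prod_X_sub_C]
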